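/- Let p ∈ ℝ with 0 < |p| < 1, let q ∈ ℝ, and let φ₁, φ₂, φ₃, φ₄ ∈ ℂ with |φ₁|² + |φ₂|² + |φ₃|² + |φ₄|² = 1. Define d₀ = |φ₁ − φ₂|² + |φ₃ − φ₄|², d₁ = p(|φ₂ − φ₄|² − |φ₁ − φ₃|²) + q(|φ₂ + φ₃|² − |φ₁ + φ₄|²), d₂ = pq(|φ₁ + φ₂|² − |φ₃ + φ₄|²) + 2p²·ℜ(conj(φ₁ − φ₄)(φ₂ − φ₃)) + 2q²·ℜ(conj(φ₁ + φ₃)(φ₂ + φ₄)), A = 1 − d₀/2 − (1 − √(1 − p²))·d₂/(2p²), and f(x) = √(1 − p²)·(p²d₀ + p·d₁·x + d₂·x²)/(2π·p²·√(p² − x²)·(1 − x²)). Then A + ∫_{−|p|}^{|p|} f(x) dx = 1; i.e., the limit measure A·δ₀ + f(x)·1_{(−|p|,|p|)}(x) dx of Theorem 2(A) is a probability measure. -/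

import Mathlib

open Real MeasureTheory

noncomputable section

/-- `d₀ = |φ₁ − φ₂|² + |φ₃ − φ₄|²`. -/
def d0 (φ₁ φ₂ φ₃ φ₄ : ℂ) : ℝ :=
  Complex.normSq (φ₁ - φ₂) + Complex.normSq (φ₃ - φ₄)

/-- `d₁ = p(|φ₂ − φ₄|² − |φ₁ − φ₃|²) + q(|φ₂ + φ₃|² − |φ₁ + φ₄|²)`. -/
def d1 (p q : ℝ) (φ₁ φ₂ φ₃ φ₄ : ℂ) : ℝ :=
  p * (Complex.normSq (φ₂ - φ₄) - Complex.normSq (φ₁ - φ₃))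
    + q * (Complex.normSq (φ₂ + φ₃) - Complex.normSq (φ₁ + φ₄))

/-- `d₂ = pq(|φ₁ + φ₂|² − |φ₃ + φ₄|²) + 2p²ℜ(conj(φ₁ − φ₄)(φ₂ − φ₃)) + 2q²ℜ(conj(φ₁ + φ₃)(φ₂ + φ₄))`. -/
def d2 (p q : ℝ) (φ₁ φ₂ φ₃ φ₄ : ℂ) : ℝ :=
  p * q * (Complex.normSq (φ₁ + φ₂) - Complex.normSq (φ₃ + φ₄))
    + 2 * p ^ 2 * ((starRingEnd ℂ) (φ₁ - φ₄) * (φ₂ - φ₃)).re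
    + 2 * q ^ 2 * ((starRingEnd ℂ) (φ₁ + φ₃) * (φ₂ + φ₄)).re

/-- The coefficient `A` of the Dirac delta part of the limit measure. -/
def coeffA (p q : ℝ) (φ₁ φ₂ φ₃ φ₄ : ℂ) : ℝ :=
  1 - d0 φ₁ φ₂ φ₃ φ₄ / 2
    - (1 - Real.sqrt (1 - p ^ 2)) * d2 p q φ₁ φ₂ φ₃ φ₄ / (2 * p ^ 2)

/-- The density `f` of the continuous part of the limit measure. -/
def densF (p q : ℝ) (φ₁ φ₂ φ₃ φ₄ : ℂ) (x : ℝ) : ℝ :=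
  Real.sqrt (1 - p ^ 2) *
      (p ^ 2 * d0 φ₁ φ₂ φ₃ φ₄ + p * d1 p q φ₁ φ₂ φ₃ φ₄ * x + d2 p q φ₁ φ₂ φ₃ φ₄ * x ^ 2)
    / (2 * π * p ^ 2 * Real.sqrt (p ^ 2 - x ^ 2) * (1 - x ^ 2))

lemma hasDerivAt_A1 {p : ℝ} (hp1 : p ^ 2 < 1) (θ : ℝ) :
    HasDerivAt (fun t => t + Real.arctan (((Real.sqrt (1 - p ^ 2) - 1) * Real.sin t * Real.cos t)
      / (Real.cos t ^ 2 + Real.sqrt (1 - p ^ 2) * Real.sin t ^ 2)))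
      (Real.sqrt (1 - p ^ 2) / (1 - p ^ 2 * Real.sin θ ^ 2)) θ := by
  set r := Real.sqrt (1 - p ^ 2) with hrdef
  have hr : r ^ 2 = 1 - p ^ 2 := Real.sq_sqrt (by nlinarith)
  have hrpos : 0 < r := Real.sqrt_pos.2 (by nlinarith)
  have pyth : Real.sin θ ^ 2 + Real.cos θ ^ 2 = 1 := Real.sin_sq_add_cos_sq θ
  have hDpos : 0 < Real.cos θ ^ 2 + r * Real.sin θ ^ 2 := by
    nlinarith [sq_nonneg (Real.sin θ), sq_nonneg (Real.cos θ)]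
  have hD0 : Real.cos θ ^ 2 + r * Real.sin θ ^ 2 ≠ 0 := ne_of_gt hDpos
  have hden : 0 < 1 - p ^ 2 * Real.sin θ ^ 2 := by
    nlinarith [sq_nonneg (Real.sin θ), sq_nonneg p, sq_nonneg (p * Real.cos θ)]
  have hN : HasDerivAt (fun t => (r - 1) * Real.sin t * Real.cos t)
      ((r - 1) * (Real.cos θ ^ 2 - Real.sin θ ^ 2)) θ := by
    have h := ((Real.hasDerivAt_sin θ).const_mul (r - 1)).mul (Real.hasDerivAt_cos θ)
    refine h.congr_deriv ?_
    ring
  have hD : HasDerivAt (fun t => Real.cos t ^ 2 + r * Real.sin t ^ 2)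
      (2 * (r - 1) * Real.sin θ * Real.cos θ) θ := by
    have h := (((Real.hasDerivAt_cos θ).pow 2)).add (((Real.hasDerivAt_sin θ).pow 2).const_mul r)
    refine h.congr_deriv ?_
    ring
  have hfinal := (hasDerivAt_id' (x := θ)).add (hN.div hD hD0).arctan
  refine hfinal.congr_deriv ?_
  simp only [Pi.div_apply]
  set s := Real.sin θ
  set co := Real.cos θ
  have key1 : (co ^ 2 + r * s ^ 2) ^ 2 + ((r - 1) * s * co) ^ 2 = 1 - p ^ 2 * s ^ 2 := by
    linear_combination (co ^ 2 + r ^ 2 * s ^ 2 + 1) * pyth + s ^ 2 * hr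
  have key2 : (r - 1) * (co ^ 2 - s ^ 2) * (co ^ 2 + r * s ^ 2)
      - (r - 1) * s * co * (2 * (r - 1) * s * co) = r - (1 - p ^ 2 * s ^ 2) := by
    linear_combination ((r - 1) * (co ^ 2 - r * s ^ 2 + 1)) * pyth - s ^ 2 * hr
  have e1 : 1 + ((r - 1) * s * co / (co ^ 2 + r * s ^ 2)) ^ 2
      = (1 - p ^ 2 * s ^ 2) / (co ^ 2 + r * s ^ 2) ^ 2 := by
    rw [div_pow, ← key1]
    field_simp
  rw [e1, key2]
  field_simp
  rw [mul_div_cancel_left₀ _ (ne_of_gt (by linarith [hDpos, mul_comm r (s ^ 2)] : (0:ℝ) < co ^ 2 + s ^ 2 * r))]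
  ring

lemma hasDerivAt_A2 {p : ℝ} (hp1 : p ^ 2 < 1) (θ : ℝ) :
    HasDerivAt (fun t => -(1 / Real.sqrt (1 - p ^ 2))
        * Real.arctan (|p| * Real.cos t / Real.sqrt (1 - p ^ 2)))
      (|p| * Real.sin θ / (1 - p ^ 2 * Real.sin θ ^ 2)) θ := by
  set r := Real.sqrt (1 - p ^ 2) with hrdef
  have hr : r ^ 2 = 1 - p ^ 2 := Real.sq_sqrt (by nlinarith)
  have hrpos : 0 < r := Real.sqrt_pos.2 (by nlinarith)
  have hr0 : r ≠ 0 := ne_of_gt hrpos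
  have pyth : Real.sin θ ^ 2 + Real.cos θ ^ 2 = 1 := Real.sin_sq_add_cos_sq θ
  have hden : 0 < 1 - p ^ 2 * Real.sin θ ^ 2 := by
    nlinarith [sq_nonneg (Real.sin θ), sq_nonneg p, sq_nonneg (p * Real.cos θ)]
  have hc : |p| ^ 2 = p ^ 2 := sq_abs p
  have hinner : HasDerivAt (fun t => |p| * Real.cos t / r) (|p| * (-Real.sin θ) / r) θ :=
    ((Real.hasDerivAt_cos θ).const_mul |p|).div_const r
  have hfinal := (hinner.arctan).const_mul (-(1 / r))
  refine hfinal.congr_deriv ?_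
  set s := Real.sin θ
  set co := Real.cos θ
  have e1 : 1 + (|p| * co / r) ^ 2 = (1 - p ^ 2 * s ^ 2) / r ^ 2 := by
    rw [div_pow]
    rw [add_div' _ _ _ (pow_ne_zero 2 hr0), div_eq_div_iff (pow_ne_zero 2 hr0) (pow_ne_zero 2 hr0)]
    linear_combination (r ^ 2) * co ^ 2 * hc + (1 - p ^ 2 * s ^ 2 - co ^ 2 * p ^ 2) * r ^ 2 * hr + p ^ 2 * r ^ 2 * r ^ 2 * pyth + r ^ 2 * p ^ 4 * pyth + r ^ 2 * p ^ 2 * hr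
  rw [e1]
  field_simp

/-- The limit measure `A·δ₀ + f(x)·1_{(−|p|,|p|)}(x) dx` of Theorem 2(A) is a probability
measure: `A + ∫_{−|p|}^{|p|} f(x) dx = 1`. -/
theorem limit_measure_is_probability (p q : ℝ) (hp0 : 0 < |p|) (hp1 : |p| < 1)
    (φ₁ φ₂ φ₃ φ₄ : ℂ)
    (hφ : Complex.normSq φ₁ + Complex.normSq φ₂ + Complex.normSq φ₃ + Complex.normSq φ₄ = 1) :
    coeffA p q φ₁ φ₂ φ₃ φ₄
        + ∫ x in Set.Ioo (-|p|) |p|, densF p q φ₁ φ₂ φ₃ φ₄ x = 1 := by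
  have hpne : p ≠ 0 := by
    intro h; rw [h, abs_zero] at hp0; exact lt_irrefl 0 hp0
  have hp2 : p ^ 2 < 1 := by rw [← sq_abs]; nlinarith
  have hπ := Real.pi_pos
  set r := Real.sqrt (1 - p ^ 2) with hrdef
  have hrpos : 0 < r := Real.sqrt_pos.2 (by nlinarith)
  have hr0 : r ≠ 0 := ne_of_gt hrpos
  set D0 := d0 φ₁ φ₂ φ₃ φ₄ with hD0def
  set D1 := d1 p q φ₁ φ₂ φ₃ φ₄ with hD1def
  set D2 := d2 p q φ₁ φ₂ φ₃ φ₄ with hD2def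
  have hdenpos : ∀ θ : ℝ, 0 < 1 - p ^ 2 * Real.sin θ ^ 2 := by
    intro θ
    have pyth := Real.sin_sq_add_cos_sq θ
    nlinarith [sq_nonneg (p * Real.cos θ), sq_nonneg (Real.cos θ)]
  set g : ℝ → ℝ := fun θ =>
      r * (p ^ 2 * D0 + p * D1 * (|p| * Real.sin θ) + D2 * (p ^ 2 * Real.sin θ ^ 2))
        / (2 * π * p ^ 2 * (1 - p ^ 2 * Real.sin θ ^ 2)) with hgdef
  -- Step 1: image of the substitution
  have himg : (fun θ : ℝ => |p| * Real.sin θ) '' Set.Ioo (-(π / 2)) (π / 2)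
      = Set.Ioo (-|p|) |p| := by
    ext y
    constructor
    · rintro ⟨θ, ⟨h1, h2⟩, rfl⟩
      have hθm : θ ∈ Set.Icc (-(π / 2)) (π / 2) := ⟨le_of_lt h1, le_of_lt h2⟩
      have hs1 : Real.sin θ < 1 := by
        have := Real.strictMonoOn_sin hθm (Set.right_mem_Icc.2 (by linarith)) h2
        simpa using this
      have hs2 : -1 < Real.sin θ := by
        have := Real.strictMonoOn_sin (Set.left_mem_Icc.2 (by linarith)) hθm h1
        simpa using this
      have hb1 : -|p| < |p| * Real.sin θ := by nlinarith
      have hb2 : |p| * Real.sin θ < |p| := by nlinarith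
      exact ⟨hb1, hb2⟩
    · rintro ⟨hy1, hy2⟩
      have h1 : -1 < y / |p| := by rw [lt_div_iff₀ hp0]; linarith
      have h2 : y / |p| < 1 := (div_lt_one hp0).2 hy2
      refine ⟨Real.arcsin (y / |p|), ⟨Real.neg_pi_div_two_lt_arcsin.2 h1,
        Real.arcsin_lt_pi_div_two.2 h2⟩, ?_⟩
      show |p| * Real.sin (Real.arcsin (y / |p|)) = y
      rw [Real.sin_arcsin (le_of_lt h1) (le_of_lt h2)]
      field_simp
  have hinj : Set.InjOn (fun θ : ℝ => |p| * Real.sin θ) (Set.Ioo (-(π / 2)) (π / 2)) := by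
    intro a ha b hb hab
    exact Real.injOn_sin (Set.Ioo_subset_Icc_self ha) (Set.Ioo_subset_Icc_self hb)
      (mul_left_cancel₀ (ne_of_gt hp0) hab)
  have hder : ∀ θ ∈ Set.Ioo (-(π / 2)) (π / 2),
      HasDerivWithinAt (fun θ : ℝ => |p| * Real.sin θ) (|p| * Real.cos θ)
        (Set.Ioo (-(π / 2)) (π / 2)) θ :=
    fun θ _ => (((Real.hasDerivAt_sin θ).const_mul |p|)).hasDerivWithinAt
  have hchg : ∫ x in Set.Ioo (-|p|) |p|, densF p q φ₁ φ₂ φ₃ φ₄ x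
      = ∫ θ in Set.Ioo (-(π / 2)) (π / 2),
          |(|p| * Real.cos θ)| • densF p q φ₁ φ₂ φ₃ φ₄ (|p| * Real.sin θ) := by
    rw [← himg]
    exact MeasureTheory.integral_image_eq_integral_abs_deriv_smul measurableSet_Ioo hder hinj _
  -- Step 2: simplify the integrand
  have hcong : ∫ θ in Set.Ioo (-(π / 2)) (π / 2),
        |(|p| * Real.cos θ)| • densF p q φ₁ φ₂ φ₃ φ₄ (|p| * Real.sin θ)
      = ∫ θ in Set.Ioo (-(π / 2)) (π / 2), g θ := by
    apply MeasureTheory.setIntegral_congr_fun measurableSet_Ioo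
    intro θ hθ
    have hco : 0 < Real.cos θ := Real.cos_pos_of_mem_Ioo hθ
    have pyth := Real.sin_sq_add_cos_sq θ
    have hx2 : p ^ 2 - (|p| * Real.sin θ) ^ 2 = (|p| * Real.cos θ) ^ 2 := by
      rw [mul_pow, mul_pow, sq_abs]
      linear_combination (-(p ^ 2)) * pyth
    have hsq : Real.sqrt (p ^ 2 - (|p| * Real.sin θ) ^ 2) = |p| * Real.cos θ := by
      rw [hx2]; exact Real.sqrt_sq (by positivity)
    have habs : |(|p| * Real.cos θ)| = |p| * Real.cos θ := abs_of_pos (by positivity)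
    have hden := hdenpos θ
    have hpabs : |p| ≠ 0 := ne_of_gt hp0
    simp only [smul_eq_mul, densF, ← hrdef, ← hD0def, ← hD1def, ← hD2def]
    rw [hsq, habs, hgdef]
    simp only [mul_pow, sq_abs]
    field_simp
  -- Step 3: FTC
  have hle : -(π / 2) ≤ π / 2 := by linarith
  set G : ℝ → ℝ := fun θ => r / (2 * π * p ^ 2) *
      ((p ^ 2 * D0 + D2) / r *
          (θ + Real.arctan (((r - 1) * Real.sin θ * Real.cos θ)
            / (Real.cos θ ^ 2 + r * Real.sin θ ^ 2)))
        + p * D1 * (-(1 / r) * Real.arctan (|p| * Real.cos θ / r))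
        - D2 * θ) with hGdef
  have hG : ∀ θ : ℝ, HasDerivAt G (g θ) θ := by
    intro θ
    have h1 := (hasDerivAt_A1 hp2 θ).const_mul ((p ^ 2 * D0 + D2) / r)
    have h2 := (hasDerivAt_A2 hp2 θ).const_mul (p * D1)
    have h3 := (hasDerivAt_id θ).const_mul D2
    have h := ((h1.add h2).sub h3).const_mul (r / (2 * π * p ^ 2))
    rw [← hrdef] at h
    refine h.congr_deriv ?_
    have hden := hdenpos θ
    have hdne : (1 : ℝ) - p ^ 2 * Real.sin θ ^ 2 ≠ 0 := ne_of_gt hden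
    simp only [hgdef]
    field_simp
    ring
  have hInt : IntervalIntegrable g volume (-(π / 2)) (π / 2) := by
    apply Continuous.intervalIntegrable
    simp only [hgdef]
    apply Continuous.div
    · fun_prop
    · fun_prop
    · intro θ
      have hden := hdenpos θ
      positivity
  have hIoo : ∫ θ in Set.Ioo (-(π / 2)) (π / 2), g θ = ∫ θ in (-(π / 2))..(π / 2), g θ := by
    rw [intervalIntegral.integral_of_le hle, MeasureTheory.integral_Ioc_eq_integral_Ioo]
  have hFTC := intervalIntegral.integral_eq_sub_of_hasDerivAt (f := G) (f' := g)
    (fun θ _ => hG θ) hInt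
  have hGval : G (π / 2) - G (-(π / 2))
      = r / (2 * π * p ^ 2) * ((p ^ 2 * D0 + D2) / r * π - D2 * π) := by
    simp only [hGdef, Real.sin_pi_div_two, Real.cos_pi_div_two, Real.sin_neg, Real.cos_neg,
      mul_zero, zero_mul, mul_one, mul_neg, neg_zero, zero_div, Real.arctan_zero, add_zero,
      zero_add]
    ring_nf
  rw [hchg, hcong, hIoo, hFTC, hGval]
  simp only [coeffA, ← hrdef, ← hD0def, ← hD2def]
  field_simp
  ring

end
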